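/- The zero vector minimizes the adversarial training risk R^adv(θ) = (1/n)∑ᵢ(|yᵢ - xᵢᵀθ| + δ‖θ‖_*)² if and only if δ ≥ ‖Xᵀy‖ / ‖y‖₁. -/

import Mathlib

open Matrix

/-- The dual norm `‖θ‖_* = sup_{‖x‖ ≤ 1} |θᵀx|` of a norm `N` on `ℝ^p`. -/
noncomputable def dualNorm {p : ℕ} (N : (Fin p → ℝ) → ℝ) (θ : Fin p → ℝ) : ℝ :=
  sSup {v | ∃ x : Fin p → ℝ, N x ≤ 1 ∧ v = |θ ⬝ᵥ x|}

/-- The adversarial training risk `(1/n) ∑ᵢ (|yᵢ - xᵢᵀθ| + δ‖θ‖_*)²`. -/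
noncomputable def advRisk {n p : ℕ} (N : (Fin p → ℝ) → ℝ)
    (X : Matrix (Fin n) (Fin p) ℝ) (y : Fin n → ℝ) (δ : ℝ) (θ : Fin p → ℝ) : ℝ :=
  (1 / n : ℝ) * ∑ i, (|y i - X i ⬝ᵥ θ| + δ * dualNorm N θ) ^ 2

section Aux

variable {p : ℕ} {N : (Fin p → ℝ) → ℝ}

lemma myN_zero (hN_eq : ∀ v, N v = 0 ↔ v = 0) : N 0 = 0 := (hN_eq 0).2 rfl

lemma myN_neg (hN_smul : ∀ (a : ℝ) v, N (a • v) = |a| * N v) (v : Fin p → ℝ) :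
    N (-v) = N v := by
  have h := hN_smul (-1) v
  simpa using h

lemma myN_nonneg (hN_eq : ∀ v, N v = 0 ↔ v = 0)
    (hN_smul : ∀ (a : ℝ) v, N (a • v) = |a| * N v)
    (hN_add : ∀ v w, N (v + w) ≤ N v + N w) (v : Fin p → ℝ) : 0 ≤ N v := by
  have h1 := hN_add v (-v)
  have h2 : N (v + -v) = 0 := by rw [add_neg_cancel]; exact myN_zero hN_eq
  have h3 := myN_neg hN_smul v
  linarith

lemma myN_sum (hN_eq : ∀ v, N v = 0 ↔ v = 0)
    (hN_add : ∀ v w, N (v + w) ≤ N v + N w)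
    {ι : Type*} (s : Finset ι) (f : ι → Fin p → ℝ) :
    N (∑ j ∈ s, f j) ≤ ∑ j ∈ s, N (f j) := by
  classical
  induction s using Finset.induction with
  | empty => simp [myN_zero hN_eq]
  | insert _ _ h ih =>
      rw [Finset.sum_insert h, Finset.sum_insert h]
      exact (hN_add _ _).trans (by linarith)

lemma myN_upper (hN_eq : ∀ v, N v = 0 ↔ v = 0)
    (hN_smul : ∀ (a : ℝ) v, N (a • v) = |a| * N v)
    (hN_add : ∀ v w, N (v + w) ≤ N v + N w) :
    ∃ C : ℝ, 0 ≤ C ∧ ∀ x, N x ≤ C * ‖x‖ := by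
  classical
  set e : Fin p → (Fin p → ℝ) := fun i => fun j => if i = j then 1 else 0 with he
  refine ⟨∑ j, N (e j), Finset.sum_nonneg fun j _ => myN_nonneg hN_eq hN_smul hN_add _, ?_⟩
  intro x
  have hx : x = ∑ i, x i • e i := pi_eq_sum_univ x
  calc N x = N (∑ i, x i • e i) := by rw [← hx]
    _ ≤ ∑ i, N (x i • e i) := myN_sum hN_eq hN_add _ _
    _ ≤ ∑ i, ‖x‖ * N (e i) := by
        refine Finset.sum_le_sum fun i _ => ?_
        rw [hN_smul]
        have h1 : |x i| ≤ ‖x‖ := by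
          simpa using norm_le_pi_norm x i
        exact mul_le_mul_of_nonneg_right h1 (myN_nonneg hN_eq hN_smul hN_add _)
    _ = (∑ j, N (e j)) * ‖x‖ := by
        rw [Finset.sum_mul]
        exact Finset.sum_congr rfl fun i _ => mul_comm _ _

lemma myN_cont (hN_eq : ∀ v, N v = 0 ↔ v = 0)
    (hN_smul : ∀ (a : ℝ) v, N (a • v) = |a| * N v)
    (hN_add : ∀ v w, N (v + w) ≤ N v + N w) : Continuous N := by
  obtain ⟨C, hC0, hC⟩ := myN_upper hN_eq hN_smul hN_add
  have : LipschitzWith (Real.toNNReal C) N := by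
    apply LipschitzWith.of_dist_le_mul
    intro x y
    have h1 : N x - N y ≤ N (x - y) := by
      have := hN_add (x - y) y
      simpa using this
    have h2 : N y - N x ≤ N (x - y) := by
      have := hN_add (y - x) x
      have hn : N (y - x) = N (x - y) := by
        rw [show y - x = -(x - y) by ring, myN_neg hN_smul]
      simp only [sub_add_cancel] at this
      linarith
    have h3 : N (x - y) ≤ C * ‖x - y‖ := hC _
    rw [Real.dist_eq, Real.coe_toNNReal C hC0, dist_eq_norm]
    rw [abs_le]
    constructor <;> linarith
  exact this.continuous

lemma myN_lower (hN_eq : ∀ v, N v = 0 ↔ v = 0)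
    (hN_smul : ∀ (a : ℝ) v, N (a • v) = |a| * N v)
    (hN_add : ∀ v w, N (v + w) ≤ N v + N w) :
    ∃ c : ℝ, 0 < c ∧ ∀ x, c * ‖x‖ ≤ N x := by
  rcases Nat.eq_zero_or_pos p with hp | hp
  · refine ⟨1, one_pos, fun x => ?_⟩
    have hx : x = 0 := by
      subst hp
      exact Subsingleton.elim _ _
    simp [hx, myN_zero hN_eq]
  · have : Nontrivial (Fin p → ℝ) := by
      have : Nonempty (Fin p) := ⟨⟨0, hp⟩⟩
      infer_instance
    have hsne : (Metric.sphere (0 : Fin p → ℝ) 1).Nonempty :=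
      NormedSpace.sphere_nonempty.2 zero_le_one
    have hscomp : IsCompact (Metric.sphere (0 : Fin p → ℝ) 1) := isCompact_sphere _ _
    obtain ⟨x₀, hx₀s, hx₀min⟩ := hscomp.exists_isMinOn hsne
      ((myN_cont hN_eq hN_smul hN_add).continuousOn)
    have hx₀norm : ‖x₀‖ = 1 := by simpa using hx₀s
    have hx₀ne : x₀ ≠ 0 := by
      intro h; rw [h] at hx₀norm; simp at hx₀norm
    have hc0 : 0 < N x₀ := by
      rcases lt_or_eq_of_le (myN_nonneg hN_eq hN_smul hN_add x₀) with h | h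
      · exact h
      · exact absurd ((hN_eq x₀).1 h.symm) hx₀ne
    refine ⟨N x₀, hc0, fun x => ?_⟩
    rcases eq_or_ne x 0 with hx | hx
    · simp [hx, myN_zero hN_eq]
    · have hxn : 0 < ‖x‖ := norm_pos_iff.2 hx
      have hmem : ‖x‖⁻¹ • x ∈ Metric.sphere (0 : Fin p → ℝ) 1 := by
        simp [norm_smul, abs_of_pos (inv_pos.2 hxn), inv_mul_cancel₀ hxn.ne']
      have h1 : N x₀ ≤ N (‖x‖⁻¹ • x) := hx₀min hmem
      have h2 : N (‖x‖⁻¹ • x) = ‖x‖⁻¹ * N x := by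
        rw [hN_smul, abs_of_pos (inv_pos.2 hxn)]
      rw [h2] at h1
      calc N x₀ * ‖x‖ ≤ (‖x‖⁻¹ * N x) * ‖x‖ := by
            exact mul_le_mul_of_nonneg_right h1 hxn.le
        _ = N x := by field_simp

lemma dual_mem_zero {θ : Fin p → ℝ} (hN_eq : ∀ v, N v = 0 ↔ v = 0) :
    (0 : ℝ) ∈ {v | ∃ x : Fin p → ℝ, N x ≤ 1 ∧ v = |θ ⬝ᵥ x|} :=
  ⟨0, by simp [myN_zero hN_eq], by simp⟩

lemma dual_bddAbove (hN_eq : ∀ v, N v = 0 ↔ v = 0)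
    (hN_smul : ∀ (a : ℝ) v, N (a • v) = |a| * N v)
    (hN_add : ∀ v w, N (v + w) ≤ N v + N w) (θ : Fin p → ℝ) :
    BddAbove {v | ∃ x : Fin p → ℝ, N x ≤ 1 ∧ v = |θ ⬝ᵥ x|} := by
  obtain ⟨c, hc0, hc⟩ := myN_lower hN_eq hN_smul hN_add
  refine ⟨(∑ j, |θ j|) * c⁻¹, ?_⟩
  rintro v ⟨x, hx1, rfl⟩
  have hxb : ‖x‖ ≤ c⁻¹ := by
    have h := (hc x).trans hx1
    calc ‖x‖ = c⁻¹ * (c * ‖x‖) := by field_simp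
      _ ≤ c⁻¹ * 1 := mul_le_mul_of_nonneg_left h (inv_nonneg.2 hc0.le)
      _ = c⁻¹ := mul_one _
  calc |θ ⬝ᵥ x| ≤ ∑ j, |θ j * x j| := by
        simpa [dotProduct] using Finset.abs_sum_le_sum_abs (fun j => θ j * x j) Finset.univ
    _ ≤ ∑ j, |θ j| * c⁻¹ := by
        refine Finset.sum_le_sum fun j _ => ?_
        rw [abs_mul]
        refine mul_le_mul_of_nonneg_left ?_ (abs_nonneg _)
        exact le_trans (by simpa using norm_le_pi_norm x j) hxb
    _ = (∑ j, |θ j|) * c⁻¹ := by rw [Finset.sum_mul]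

lemma dual_nonneg (hN_eq : ∀ v, N v = 0 ↔ v = 0)
    (hN_smul : ∀ (a : ℝ) v, N (a • v) = |a| * N v)
    (hN_add : ∀ v w, N (v + w) ≤ N v + N w) (θ : Fin p → ℝ) :
    0 ≤ dualNorm N θ :=
  le_csSup (dual_bddAbove hN_eq hN_smul hN_add θ) (dual_mem_zero hN_eq)

lemma dual_pairing (hN_eq : ∀ v, N v = 0 ↔ v = 0)
    (hN_smul : ∀ (a : ℝ) v, N (a • v) = |a| * N v)
    (hN_add : ∀ v w, N (v + w) ≤ N v + N w) (u θ : Fin p → ℝ) :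
    u ⬝ᵥ θ ≤ N u * dualNorm N θ := by
  rcases eq_or_ne u 0 with hu | hu
  · simp [hu, myN_zero hN_eq]
  · have hNu : 0 < N u := by
      rcases lt_or_eq_of_le (myN_nonneg hN_eq hN_smul hN_add u) with h | h
      · exact h
      · exact absurd ((hN_eq u).1 h.symm) hu
    have hmem : |θ ⬝ᵥ ((N u)⁻¹ • u)| ∈ {v | ∃ x : Fin p → ℝ, N x ≤ 1 ∧ v = |θ ⬝ᵥ x|} := by
      refine ⟨(N u)⁻¹ • u, ?_, rfl⟩
      rw [hN_smul, abs_of_pos (inv_pos.2 hNu), inv_mul_cancel₀ hNu.ne']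
    have h1 : |θ ⬝ᵥ ((N u)⁻¹ • u)| ≤ dualNorm N θ :=
      le_csSup (dual_bddAbove hN_eq hN_smul hN_add θ) hmem
    have h2 : θ ⬝ᵥ ((N u)⁻¹ • u) = (N u)⁻¹ * (u ⬝ᵥ θ) := by
      rw [dotProduct_smul, dotProduct_comm]
      simp [smul_eq_mul]
    have h3 : (N u)⁻¹ * (u ⬝ᵥ θ) ≤ dualNorm N θ :=
      le_trans (le_abs_self _) (h2 ▸ h1)
    calc u ⬝ᵥ θ = N u * ((N u)⁻¹ * (u ⬝ᵥ θ)) := by field_simp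
      _ ≤ N u * dualNorm N θ := mul_le_mul_of_nonneg_left h3 hNu.le

lemma dual_smul_le (hN_eq : ∀ v, N v = 0 ↔ v = 0)
    (hN_smul : ∀ (a : ℝ) v, N (a • v) = |a| * N v)
    (hN_add : ∀ v w, N (v + w) ≤ N v + N w) {t : ℝ} (ht : 0 ≤ t) (θ : Fin p → ℝ) :
    dualNorm N (t • θ) ≤ t * dualNorm N θ := by
  apply csSup_le ⟨0, dual_mem_zero hN_eq⟩
  rintro v ⟨x, hx1, rfl⟩
  have h1 : |(t • θ) ⬝ᵥ x| = t * |θ ⬝ᵥ x| := by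
    rw [smul_dotProduct, smul_eq_mul, abs_mul, abs_of_nonneg ht]
  rw [h1]
  refine mul_le_mul_of_nonneg_left ?_ ht
  exact le_csSup (dual_bddAbove hN_eq hN_smul hN_add θ) ⟨x, hx1, rfl⟩

lemma dual_zero (hN_eq : ∀ v, N v = 0 ↔ v = 0) :
    dualNorm N (0 : Fin p → ℝ) = 0 := by
  have : {v | ∃ x : Fin p → ℝ, N x ≤ 1 ∧ v = |(0 : Fin p → ℝ) ⬝ᵥ x|} = {0} := by
    ext v
    simp only [Set.mem_setOf_eq, Set.mem_singleton_iff]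
    constructor
    · rintro ⟨x, _, rfl⟩; simp
    · rintro rfl; exact ⟨0, by simp [myN_zero hN_eq], by simp⟩
  rw [dualNorm, this, csSup_singleton]

lemma exists_dual_elem (hN_eq : ∀ v, N v = 0 ↔ v = 0)
    (hN_smul : ∀ (a : ℝ) v, N (a • v) = |a| * N v)
    (hN_add : ∀ v w, N (v + w) ≤ N v + N w) {u : Fin p → ℝ} (hu : u ≠ 0) :
    ∃ θ : Fin p → ℝ, dualNorm N θ ≤ 1 ∧ θ ⬝ᵥ u = N u := by
  classical
  -- Hahn–Banach extension of the functional c • u ↦ c * N u from span {u}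
  obtain ⟨g, hg1, hg2⟩ := exists_extension_of_le_sublinear
    (LinearPMap.mkSpanSingleton u (N u) hu) N
    (fun c hc x => by rw [hN_smul, abs_of_pos hc])
    hN_add
    (by
      rintro ⟨z, hz⟩
      obtain ⟨c, rfl⟩ := Submodule.mem_span_singleton.1 hz
      rw [LinearPMap.mkSpanSingleton'_apply, hN_smul, smul_eq_mul, RingHom.id_apply]
      have := myN_nonneg hN_eq hN_smul hN_add u
      nlinarith [le_abs_self c])
  set θ : Fin p → ℝ := fun j => g (fun k => if j = k then 1 else 0) with hθ
  have hgθ : ∀ x, g x = θ ⬝ᵥ x := by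
    intro x
    rw [LinearMap.pi_apply_eq_sum_univ g x]
    simp [dotProduct, hθ, smul_eq_mul, mul_comm]
  have hgu : g u = N u := by
    have h := hg1 ⟨u, Submodule.mem_span_singleton_self u⟩
    rw [h, LinearPMap.mkSpanSingleton_apply]
  refine ⟨θ, ?_, by rw [← hgθ, hgu]⟩
  apply csSup_le ⟨0, dual_mem_zero hN_eq⟩
  rintro v ⟨x, hx1, rfl⟩
  have h1 : θ ⬝ᵥ x ≤ 1 := by rw [← hgθ]; exact (hg2 x).trans hx1
  have h2 : -(θ ⬝ᵥ x) ≤ 1 := by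
    have := hg2 (-x)
    rw [hgθ, dotProduct_neg] at this
    have hnx : N (-x) = N x := myN_neg hN_smul x
    linarith
  rw [abs_le]
  constructor <;> linarith

lemma key_ineq (a b t D δ : ℝ) (hδ : 0 < δ) (ht : 0 < t) (hD0 : 0 ≤ D) (hDt : D ≤ t)
    (hcase : a = 0 ∨ t * (|b| + 1) ≤ |a|) :
    (|a - t * b| + δ * D) ^ 2 ≤ a ^ 2 + 2 * t * (δ * |a| - a * b) + t ^ 2 * (δ + |b|) ^ 2 := by
  have hb6 : (δ - b) ^ 2 ≤ (δ + |b|) ^ 2 := by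
    nlinarith [neg_abs_le b, le_abs_self b, abs_nonneg b]
  have hb7 : (δ + b) ^ 2 ≤ (δ + |b|) ^ 2 := by
    nlinarith [neg_abs_le b, le_abs_self b, abs_nonneg b]
  rcases hcase with rfl | hcase
  · have h1 : |0 - t * b| = t * |b| := by
      rw [zero_sub, abs_neg, abs_mul, abs_of_pos ht]
    rw [h1]
    have hb0 : 0 ≤ t * |b| + δ * D := by positivity
    have hub : t * |b| + δ * D ≤ t * |b| + δ * t := by nlinarith
    have h2 := pow_le_pow_left₀ hb0 hub 2
    simp only [abs_zero]
    nlinarith [sq_nonneg t]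
  · rcases abs_cases a with ⟨h1, h2⟩ | ⟨h1, h2⟩
    · rw [h1] at hcase
      have htb : t * b ≤ t * |b| := by nlinarith [le_abs_self b]
      have h3 : |a - t * b| = a - t * b := by
        rw [abs_of_nonneg]; nlinarith [abs_nonneg b]
      rw [h3, h1]
      have h4 : 0 ≤ a - t * b + δ * D := by nlinarith [mul_nonneg hδ.le hD0, abs_nonneg b]
      have h5 : a - t * b + δ * D ≤ a - t * b + δ * t := by nlinarith
      have h6 := pow_le_pow_left₀ h4 h5 2
      nlinarith [sq_nonneg t]
    · rw [h1] at hcase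
      have htb : -(t * b) ≤ t * |b| := by nlinarith [neg_abs_le b]
      have h3 : |a - t * b| = t * b - a := by
        rw [abs_of_nonpos]; · ring
        nlinarith [abs_nonneg b]
      rw [h3, h1]
      have h4 : 0 ≤ t * b - a + δ * D := by nlinarith [mul_nonneg hδ.le hD0, abs_nonneg b]
      have h5 : t * b - a + δ * D ≤ t * b - a + δ * t := by nlinarith
      have h6 := pow_le_pow_left₀ h4 h5 2
      nlinarith [sq_nonneg t]

end Aux

theorem stmt5 {n p : ℕ} (N : (Fin p → ℝ) → ℝ)
    (hN_eq : ∀ v, N v = 0 ↔ v = 0)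
    (hN_smul : ∀ (a : ℝ) v, N (a • v) = |a| * N v)
    (hN_add : ∀ v w, N (v + w) ≤ N v + N w)
    (X : Matrix (Fin n) (Fin p) ℝ) (y : Fin n → ℝ) (hy : y ≠ 0)
    (δ : ℝ) (hδ : 0 < δ) :
    (∀ θ : Fin p → ℝ, advRisk N X y δ 0 ≤ advRisk N X y δ θ) ↔
      N (Xᵀ *ᵥ y) / (∑ i, |y i|) ≤ δ := by
  classical
  -- basic facts
  obtain ⟨i₀, hi₀⟩ : ∃ i, y i ≠ 0 := by
    by_contra h
    push_neg at h
    exact hy (funext h)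
  have hY : 0 < ∑ i, |y i| :=
    Finset.sum_pos' (fun i _ => abs_nonneg _)
      ⟨i₀, Finset.mem_univ _, abs_pos.2 hi₀⟩
  have hn : 0 < n := i₀.pos
  have hninv : 0 < (1 / n : ℝ) := by positivity
  have hrisk0 : advRisk N X y δ 0 = (1 / n : ℝ) * ∑ i, (y i) ^ 2 := by
    rw [advRisk, dual_zero hN_eq]
    congr 1
    refine Finset.sum_congr rfl fun i _ => ?_
    simp [sq_abs]
  -- the key identity ∑ y i * (X i ⬝ᵥ θ) = (Xᵀ *ᵥ y) ⬝ᵥ θ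
  have hkey : ∀ θ : Fin p → ℝ, ∑ i, y i * (X i ⬝ᵥ θ) = (Xᵀ *ᵥ y) ⬝ᵥ θ := by
    intro θ
    rw [Matrix.mulVec_transpose, ← Matrix.dotProduct_mulVec]
    simp [dotProduct, Matrix.mulVec]
  set u : Fin p → ℝ := Xᵀ *ᵥ y with hu
  constructor
  · -- minimality → dual norm condition (contrapositive)
    intro hmin
    by_contra hcon
    push_neg at hcon
    rw [lt_div_iff₀ hY] at hcon
    -- get θ₀ realizing the norm
    have hu0 : u ≠ 0 := by
      intro h
      rw [h, myN_zero hN_eq] at hcon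
      nlinarith
    obtain ⟨θ₀, hθ₀d, hθ₀u⟩ := exists_dual_elem hN_eq hN_smul hN_add hu0
    set c : Fin n → ℝ := fun i => X i ⬝ᵥ θ₀ with hc
    set ε : ℝ := N u - δ * ∑ i, |y i| with hε
    have hεpos : 0 < ε := by rw [hε]; linarith
    set K : ℝ := ∑ i, (δ + |c i|) ^ 2 with hK
    have hKpos : 0 < K := by
      rw [hK]
      refine Finset.sum_pos (fun i _ => ?_) ⟨i₀, Finset.mem_univ _⟩
      positivity
    -- choose small t
    have hne : (Finset.univ : Finset (Fin n)).Nonempty := ⟨i₀, Finset.mem_univ _⟩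
    set t₁ : ℝ := Finset.univ.inf' hne
      (fun i => if y i = 0 then 1 else |y i| / (|c i| + 1)) with ht₁
    have ht₁pos : 0 < t₁ := by
      rw [ht₁, Finset.lt_inf'_iff]
      intro i _
      split_ifs with h
      · norm_num
      · positivity
    set t : ℝ := min t₁ (ε / K) with ht
    have htpos : 0 < t := lt_min ht₁pos (by positivity)
    have htK : t * K ≤ ε := by
      have : t ≤ ε / K := min_le_right _ _
      calc t * K ≤ (ε / K) * K := mul_le_mul_of_nonneg_right this hKpos.le
        _ = ε := by field_simp
    -- per-coordinate estimate
    set D : ℝ := dualNorm N (t • θ₀) with hD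
    have hD0 : 0 ≤ D := dual_nonneg hN_eq hN_smul hN_add _
    have hDt : D ≤ t := by
      calc D ≤ t * dualNorm N θ₀ := dual_smul_le hN_eq hN_smul hN_add htpos.le θ₀
        _ ≤ t * 1 := mul_le_mul_of_nonneg_left hθ₀d htpos.le
        _ = t := mul_one t
    have hterm : ∀ i, (|y i - X i ⬝ᵥ (t • θ₀)| + δ * D) ^ 2 ≤
        (y i) ^ 2 + 2 * t * (δ * |y i| - y i * c i) + t ^ 2 * (δ + |c i|) ^ 2 := by
      intro i
      have hXi : X i ⬝ᵥ (t • θ₀) = t * c i := by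
        rw [hc, dotProduct_smul]; simp [smul_eq_mul]
      rw [hXi]
      apply key_ineq _ _ _ _ _ hδ htpos hD0 hDt
      rcases eq_or_ne (y i) 0 with hyi | hyi
      · exact Or.inl hyi
      · right
        have h1 : t ≤ |y i| / (|c i| + 1) := by
          refine le_trans (min_le_left _ _) ?_
          have h2 := Finset.inf'_le
            (fun i => if y i = 0 then 1 else |y i| / (|c i| + 1)) (Finset.mem_univ i)
          rw [if_neg hyi] at h2
          exact h2
        have h2 : (0 : ℝ) < |c i| + 1 := by positivity
        calc t * (|c i| + 1) ≤ (|y i| / (|c i| + 1)) * (|c i| + 1) :=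
            mul_le_mul_of_nonneg_right h1 h2.le
          _ = |y i| := by field_simp
    -- sum the estimates
    have hsum : ∑ i, (|y i - X i ⬝ᵥ (t • θ₀)| + δ * D) ^ 2 ≤
        (∑ i, (y i) ^ 2) - 2 * t * ε + t ^ 2 * K := by
      calc ∑ i, (|y i - X i ⬝ᵥ (t • θ₀)| + δ * D) ^ 2
          ≤ ∑ i, ((y i) ^ 2 + 2 * t * (δ * |y i| - y i * c i) + t ^ 2 * (δ + |c i|) ^ 2) :=
            Finset.sum_le_sum fun i _ => hterm i
        _ = (∑ i, (y i) ^ 2) + 2 * t * (δ * ∑ i, |y i| - ∑ i, y i * c i)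
              + t ^ 2 * K := by
            rw [hK]
            simp only [Finset.sum_add_distrib, Finset.sum_sub_distrib, ← Finset.mul_sum]
        _ = (∑ i, (y i) ^ 2) - 2 * t * ε + t ^ 2 * K := by
            have : ∑ i, y i * c i = N u := by
              simp only [hc]
              rw [hkey θ₀, dotProduct_comm, hθ₀u]
            rw [this, hε]
            ring
    have hlt : advRisk N X y δ (t • θ₀) < advRisk N X y δ 0 := by
      rw [hrisk0, advRisk, ← hD]
      apply mul_lt_mul_of_pos_left _ hninv
      have h1 : (∑ i, (y i) ^ 2) - 2 * t * ε + t ^ 2 * K < ∑ i, (y i) ^ 2 := by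
        have h2 : t ^ 2 * K ≤ t * ε := by
          calc t ^ 2 * K = t * (t * K) := by ring
            _ ≤ t * ε := mul_le_mul_of_nonneg_left htK htpos.le
        nlinarith
      exact lt_of_le_of_lt hsum h1
    exact absurd (hmin (t • θ₀)) (not_le.2 hlt)
  · -- dual norm condition → minimality
    intro hcond θ
    rw [div_le_iff₀ hY] at hcond
    rw [hrisk0, advRisk]
    apply mul_le_mul_of_nonneg_left _ hninv.le
    set D : ℝ := dualNorm N θ with hD
    have hD0 : 0 ≤ D := dual_nonneg hN_eq hN_smul hN_add _
    -- pointwise convexity bound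
    have hterm : ∀ i, (y i) ^ 2 + 2 * (-(y i * (X i ⬝ᵥ θ)) + δ * D * |y i|) ≤
        (|y i - X i ⬝ᵥ θ| + δ * D) ^ 2 := by
      intro i
      set a : ℝ := |y i - X i ⬝ᵥ θ| + δ * D with ha
      have ha0 : 0 ≤ a := by positivity
      have h1 : a ^ 2 ≥ 2 * |y i| * a - (y i) ^ 2 := by
        nlinarith [sq_nonneg (a - |y i|), sq_abs (y i)]
      have h2 : |y i| * |y i - X i ⬝ᵥ θ| ≥ (y i) ^ 2 - y i * (X i ⬝ᵥ θ) := by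
        have := le_abs_self (y i * (y i - X i ⬝ᵥ θ))
        rw [abs_mul] at this
        nlinarith
      have habsq : |y i| ^ 2 = (y i) ^ 2 := sq_abs _
      have h3 : 2 * |y i| * a = 2 * (|y i| * |y i - X i ⬝ᵥ θ|) + 2 * (|y i| * (δ * D)) := by
        rw [ha]; ring
      have h4 : 0 ≤ |y i| * (δ * D) - δ * D * |y i| := by ring_nf; nlinarith [abs_nonneg (y i)]
      linarith
    calc ∑ i, (y i) ^ 2
        ≤ ∑ i, ((y i) ^ 2 + 2 * (-(y i * (X i ⬝ᵥ θ)) + δ * D * |y i|)) := by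
          have h1 : 0 ≤ ∑ i, (-(y i * (X i ⬝ᵥ θ)) + δ * D * |y i|) := by
            have h2 : ∑ i, (-(y i * (X i ⬝ᵥ θ)) + δ * D * |y i|) =
                δ * D * (∑ i, |y i|) - (Xᵀ *ᵥ y) ⬝ᵥ θ := by
              rw [← hkey θ]
              rw [Finset.sum_add_distrib, Finset.sum_neg_distrib, ← Finset.mul_sum]
              ring
            rw [h2]
            have h3 : (Xᵀ *ᵥ y) ⬝ᵥ θ ≤ N (Xᵀ *ᵥ y) * D :=
              dual_pairing hN_eq hN_smul hN_add _ _
            have h4 : N (Xᵀ *ᵥ y) * D ≤ δ * (∑ i, |y i|) * D :=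
              mul_le_mul_of_nonneg_right hcond hD0
            nlinarith
          rw [Finset.sum_add_distrib, ← Finset.mul_sum]
          linarith
      _ ≤ ∑ i, (|y i - X i ⬝ᵥ θ| + δ * D) ^ 2 :=
          Finset.sum_le_sum fun i _ => hterm i
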